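/- arXiv:1708.01833 — 2 statements merged into one kernel-verified Lean document; each statement's English description precedes it below -/
import Mathlib

section
/- Suppose the weighted undirected graph a on n nodes is connected. A tuple (X*, Y*, Z*, U*, W*) is an optimal solution of problem (CCR-opt) if and only if there exist Λ¹_i* ∈ ℝ^{r×p}, Λ²_i* ∈ ℝ^{m×q}, Λ³_i* ∈ ℝ^{r×q} (i = 1,…,n) such that (X*, Y*, Z*, U*, W*, Λ¹*, Λ²*, Λ³*) is an equilibrium of algorithm (CCR-alg), i.e., all the right-hand sides of (CCR-alg) vanish at this point (with all derivative-feedback terms set to zero). -/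
open Matrix

/-- Squared Frobenius norm of a real matrix: `‖M‖_F² = tr (Mᵀ M)`. -/
noncomputable def frobSq {α β : Type*} [Fintype α] [Fintype β] (M : Matrix α β ℝ) : ℝ :=
  Matrix.trace (Mᵀ * M)

/-- Frobenius inner product of real matrices: `⟨M,N⟩_F = tr (Mᵀ N)`. -/
noncomputable def frobInner {α β : Type*} [Fintype α] [Fintype β] (M N : Matrix α β ℝ) : ℝ :=
  Matrix.trace (Mᵀ * N)

/-- The weighted undirected graph with adjacency matrix `a` is connected: any two nodes are
joined by a path of adjacent nodes (nodes `u ≠ v` are adjacent iff `a u v > 0`). -/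
def GraphConnected {n : ℕ} (a : Matrix (Fin n) (Fin n) ℝ) : Prop :=
  ∀ i j : Fin n, Relation.ReflTransGen (fun u v : Fin n => u ≠ v ∧ 0 < a u v) i j

/-- Assemble a family of row blocks `M i ∈ ℝ^{d i × β}` into one matrix. -/
def blockRows {n : ℕ} {d : Fin n → ℕ} {β : Type*} (M : ∀ i, Matrix (Fin (d i)) β ℝ) :
    Matrix ((i : Fin n) × Fin (d i)) β ℝ :=
  Matrix.of fun s j => M s.1 s.2 j

/-- Assemble a family of column blocks `M i ∈ ℝ^{α × d i}` into one matrix. -/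
def blockCols {n : ℕ} {d : Fin n → ℕ} {α : Type*} (M : ∀ i, Matrix α (Fin (d i)) ℝ) :
    Matrix α ((i : Fin n) × Fin (d i)) ℝ :=
  Matrix.of fun k s => M s.1 k s.2

/-- The `i`-th row block of a matrix whose rows are partitioned according to `d`. -/
def rowBlk {n : ℕ} {d : Fin n → ℕ} {β : Type*}
    (Y : Matrix ((i : Fin n) × Fin (d i)) β ℝ) (i : Fin n) :
    Matrix (Fin (d i)) β ℝ :=
  Matrix.of fun k j => Y ⟨i, k⟩ j

/-- `[M]_R`: the matrix whose `i`-th row block is `M` and whose other row blocks are zero. -/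
def embedRow {n : ℕ} {d : Fin n → ℕ} {β : Type*} (i : Fin n)
    (M : Matrix (Fin (d i)) β ℝ) :
    Matrix ((i' : Fin n) × Fin (d i')) β ℝ :=
  Matrix.of fun s j => if h : s.1 = i then M (Fin.cast (congrArg d h) s.2) j else 0

/-- `[M]_C`: the matrix whose `i`-th column block is `M` and whose other column blocks are zero. -/
def embedCol {n : ℕ} {d : Fin n → ℕ} {α : Type*} (i : Fin n)
    (M : Matrix α (Fin (d i)) ℝ) :
    Matrix α ((i' : Fin n) × Fin (d i')) ℝ :=
  Matrix.of fun k s => if h : s.1 = i then M k (Fin.cast (congrArg d h) s.2) else 0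

/-- Feasibility for problem (CCR-opt). -/
def CCRfeas {n p : ℕ} {rdim qdim mdim : Fin n → ℕ}
    (a : Matrix (Fin n) (Fin n) ℝ)
    (Bl : ∀ i, Matrix (Fin p) (Fin (qdim i)) ℝ)
    (X : Fin n → Matrix ((i : Fin n) × Fin (rdim i)) (Fin p) ℝ)
    (Yv : ∀ i, Matrix (Fin (rdim i)) ((i' : Fin n) × Fin (qdim i')) ℝ)
    (Z : Fin n → Matrix ((i : Fin n) × Fin (rdim i)) ((i' : Fin n) × Fin (qdim i')) ℝ)
    (U W : Fin n → Matrix ((i : Fin n) × Fin (mdim i)) ((i' : Fin n) × Fin (qdim i')) ℝ) :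
    Prop :=
  (∀ i j, X i = X j) ∧
  (∀ i, U i = ∑ j, a i j • (W i - W j)) ∧
  (∀ i, embedRow i (Yv i) - X i * embedCol i (Bl i) - ∑ j, a i j • (Z i - Z j) = 0)

/-- Objective of problem (CCR-opt): `Σ_i ‖A_{li} Y_{vi} − [F_{vi}]_R − U_i‖_F²`. -/
noncomputable def CCRobj {n : ℕ} {rdim qdim mdim : Fin n → ℕ}
    (Al : ∀ i, Matrix ((i' : Fin n) × Fin (mdim i')) (Fin (rdim i)) ℝ)
    (Fv : ∀ i, Matrix (Fin (mdim i)) ((i' : Fin n) × Fin (qdim i')) ℝ)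
    (Yv : ∀ i, Matrix (Fin (rdim i)) ((i' : Fin n) × Fin (qdim i')) ℝ)
    (U : Fin n → Matrix ((i : Fin n) × Fin (mdim i)) ((i' : Fin n) × Fin (qdim i')) ℝ) : ℝ :=
  ∑ i, frobSq (Al i * Yv i - embedRow i (Fv i) - U i)

/-- Right-hand side of the `X_i`-equation in algorithm (CCR-alg). -/
noncomputable def CCRrhsX {n p : ℕ} {rdim qdim : Fin n → ℕ}
    (a : Matrix (Fin n) (Fin n) ℝ)
    (Bl : ∀ i, Matrix (Fin p) (Fin (qdim i)) ℝ)
    (X L1 : Fin n → Matrix ((i : Fin n) × Fin (rdim i)) (Fin p) ℝ)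
    (L3 : Fin n → Matrix ((i : Fin n) × Fin (rdim i)) ((i' : Fin n) × Fin (qdim i')) ℝ)
    (i : Fin n) : Matrix ((i : Fin n) × Fin (rdim i)) (Fin p) ℝ :=
  L3 i * (embedCol i (Bl i))ᵀ - ∑ j, a i j • (L1 i - L1 j) - ∑ j, a i j • (X i - X j)

/-- Right-hand side of the `Y_{vi}`-equation in algorithm (CCR-alg). -/
noncomputable def CCRrhsY {n : ℕ} {rdim qdim mdim : Fin n → ℕ}
    (Al : ∀ i, Matrix ((i' : Fin n) × Fin (mdim i')) (Fin (rdim i)) ℝ)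
    (Fv : ∀ i, Matrix (Fin (mdim i)) ((i' : Fin n) × Fin (qdim i')) ℝ)
    (Yv : ∀ i, Matrix (Fin (rdim i)) ((i' : Fin n) × Fin (qdim i')) ℝ)
    (U : Fin n → Matrix ((i : Fin n) × Fin (mdim i)) ((i' : Fin n) × Fin (qdim i')) ℝ)
    (L3 : Fin n → Matrix ((i : Fin n) × Fin (rdim i)) ((i' : Fin n) × Fin (qdim i')) ℝ)
    (i : Fin n) : Matrix (Fin (rdim i)) ((i' : Fin n) × Fin (qdim i')) ℝ :=
  -((Al i)ᵀ * (Al i * Yv i - embedRow i (Fv i) - U i)) - rowBlk (L3 i) i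

/-- Right-hand side of the `U_i`-equation in algorithm (CCR-alg). -/
noncomputable def CCRrhsU {n : ℕ} {rdim qdim mdim : Fin n → ℕ}
    (Al : ∀ i, Matrix ((i' : Fin n) × Fin (mdim i')) (Fin (rdim i)) ℝ)
    (Fv : ∀ i, Matrix (Fin (mdim i)) ((i' : Fin n) × Fin (qdim i')) ℝ)
    (Yv : ∀ i, Matrix (Fin (rdim i)) ((i' : Fin n) × Fin (qdim i')) ℝ)
    (U L2 : Fin n → Matrix ((i : Fin n) × Fin (mdim i)) ((i' : Fin n) × Fin (qdim i')) ℝ)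
    (i : Fin n) : Matrix ((i : Fin n) × Fin (mdim i)) ((i' : Fin n) × Fin (qdim i')) ℝ :=
  Al i * Yv i - embedRow i (Fv i) - U i - L2 i

/-- Right-hand side of the `W_i`-equation in algorithm (CCR-alg). -/
noncomputable def CCRrhsW {n : ℕ} {qdim mdim : Fin n → ℕ}
    (a : Matrix (Fin n) (Fin n) ℝ)
    (L2 : Fin n → Matrix ((i : Fin n) × Fin (mdim i)) ((i' : Fin n) × Fin (qdim i')) ℝ)
    (i : Fin n) : Matrix ((i : Fin n) × Fin (mdim i)) ((i' : Fin n) × Fin (qdim i')) ℝ :=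
  ∑ j, a i j • (L2 i - L2 j)

/-- Right-hand side of the `Z_i`-equation in algorithm (CCR-alg). -/
noncomputable def CCRrhsZ {n : ℕ} {rdim qdim : Fin n → ℕ}
    (a : Matrix (Fin n) (Fin n) ℝ)
    (L3 : Fin n → Matrix ((i : Fin n) × Fin (rdim i)) ((i' : Fin n) × Fin (qdim i')) ℝ)
    (i : Fin n) : Matrix ((i : Fin n) × Fin (rdim i)) ((i' : Fin n) × Fin (qdim i')) ℝ :=
  ∑ j, a i j • (L3 i - L3 j)

/-- Right-hand side of the `Λ¹_i`-equation in algorithm (CCR-alg). -/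
noncomputable def CCRrhsL1 {n p : ℕ} {rdim : Fin n → ℕ}
    (a : Matrix (Fin n) (Fin n) ℝ)
    (X : Fin n → Matrix ((i : Fin n) × Fin (rdim i)) (Fin p) ℝ)
    (i : Fin n) : Matrix ((i : Fin n) × Fin (rdim i)) (Fin p) ℝ :=
  ∑ j, a i j • (X i - X j)

/-- Right-hand side of the `Λ²_i`-equation in algorithm (CCR-alg), with the derivative
feedback replaced by the right-hand side that determines it. -/
noncomputable def CCRrhsL2 {n : ℕ} {rdim qdim mdim : Fin n → ℕ}
    (a : Matrix (Fin n) (Fin n) ℝ)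
    (Al : ∀ i, Matrix ((i' : Fin n) × Fin (mdim i')) (Fin (rdim i)) ℝ)
    (Fv : ∀ i, Matrix (Fin (mdim i)) ((i' : Fin n) × Fin (qdim i')) ℝ)
    (Yv : ∀ i, Matrix (Fin (rdim i)) ((i' : Fin n) × Fin (qdim i')) ℝ)
    (U W L2 : Fin n → Matrix ((i : Fin n) × Fin (mdim i)) ((i' : Fin n) × Fin (qdim i')) ℝ)
    (i : Fin n) : Matrix ((i : Fin n) × Fin (mdim i)) ((i' : Fin n) × Fin (qdim i')) ℝ :=
  U i + CCRrhsU Al Fv Yv U L2 i - ∑ j, a i j • (W i - W j) - ∑ j, a i j • (L2 i - L2 j)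

/-- Right-hand side of the `Λ³_i`-equation in algorithm (CCR-alg), with the derivative
feedback replaced by the right-hand side that determines it. -/
noncomputable def CCRrhsL3 {n p : ℕ} {rdim qdim mdim : Fin n → ℕ}
    (a : Matrix (Fin n) (Fin n) ℝ)
    (Al : ∀ i, Matrix ((i' : Fin n) × Fin (mdim i')) (Fin (rdim i)) ℝ)
    (Bl : ∀ i, Matrix (Fin p) (Fin (qdim i)) ℝ)
    (Fv : ∀ i, Matrix (Fin (mdim i)) ((i' : Fin n) × Fin (qdim i')) ℝ)
    (X : Fin n → Matrix ((i : Fin n) × Fin (rdim i)) (Fin p) ℝ)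
    (Yv : ∀ i, Matrix (Fin (rdim i)) ((i' : Fin n) × Fin (qdim i')) ℝ)
    (Z : Fin n → Matrix ((i : Fin n) × Fin (rdim i)) ((i' : Fin n) × Fin (qdim i')) ℝ)
    (U L2 : Fin n → Matrix ((i : Fin n) × Fin (mdim i)) ((i' : Fin n) × Fin (qdim i')) ℝ)
    (L3 : Fin n → Matrix ((i : Fin n) × Fin (rdim i)) ((i' : Fin n) × Fin (qdim i')) ℝ)
    (i : Fin n) : Matrix ((i : Fin n) × Fin (rdim i)) ((i' : Fin n) × Fin (qdim i')) ℝ :=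
  embedRow i (Yv i) + embedRow i (CCRrhsY Al Fv Yv U L3 i)
    - X i * embedCol i (Bl i) - ∑ j, a i j • (Z i - Z j) - ∑ j, a i j • (L3 i - L3 j)

/-- Equilibrium of algorithm (CCR-alg): all right-hand sides vanish. -/
noncomputable def CCRequil {n p : ℕ} {rdim qdim mdim : Fin n → ℕ}
    (a : Matrix (Fin n) (Fin n) ℝ)
    (Al : ∀ i, Matrix ((i' : Fin n) × Fin (mdim i')) (Fin (rdim i)) ℝ)
    (Bl : ∀ i, Matrix (Fin p) (Fin (qdim i)) ℝ)
    (Fv : ∀ i, Matrix (Fin (mdim i)) ((i' : Fin n) × Fin (qdim i')) ℝ)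
    (X : Fin n → Matrix ((i : Fin n) × Fin (rdim i)) (Fin p) ℝ)
    (Yv : ∀ i, Matrix (Fin (rdim i)) ((i' : Fin n) × Fin (qdim i')) ℝ)
    (Z : Fin n → Matrix ((i : Fin n) × Fin (rdim i)) ((i' : Fin n) × Fin (qdim i')) ℝ)
    (U W : Fin n → Matrix ((i : Fin n) × Fin (mdim i)) ((i' : Fin n) × Fin (qdim i')) ℝ)
    (L1 : Fin n → Matrix ((i : Fin n) × Fin (rdim i)) (Fin p) ℝ)
    (L2 : Fin n → Matrix ((i : Fin n) × Fin (mdim i)) ((i' : Fin n) × Fin (qdim i')) ℝ)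
    (L3 : Fin n → Matrix ((i : Fin n) × Fin (rdim i)) ((i' : Fin n) × Fin (qdim i')) ℝ) :
    Prop :=
  ∀ i, CCRrhsX a Bl X L1 L3 i = 0 ∧ CCRrhsY Al Fv Yv U L3 i = 0 ∧
    CCRrhsU Al Fv Yv U L2 i = 0 ∧ CCRrhsW a L2 i = 0 ∧ CCRrhsZ a L3 i = 0 ∧
    CCRrhsL1 a X i = 0 ∧ CCRrhsL2 a Al Fv Yv U W L2 i = 0 ∧
    CCRrhsL3 a Al Bl Fv X Yv Z U L2 L3 i = 0

set_option maxHeartbeats 1000000 in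
/-- dummy -/
theorem aux_marker : True := trivial

section FrobAux
variable {α β : Type*} [Fintype α] [Fintype β]

lemma frobInner_eq (M N : Matrix α β ℝ) : frobInner M N = ∑ j, ∑ k, M k j * N k j := by
  simp [frobInner, Matrix.trace, Matrix.mul_apply, Matrix.diag, Matrix.transpose_apply]

lemma frobSq_eq (M : Matrix α β ℝ) : frobSq M = frobInner M M := rfl

lemma frobInner_comm (M N : Matrix α β ℝ) : frobInner M N = frobInner N M := by
  simp [frobInner_eq, mul_comm]

lemma frobInner_add_right (M N P : Matrix α β ℝ) :
    frobInner M (N + P) = frobInner M N + frobInner M P := by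
  simp [frobInner_eq, Matrix.add_apply, mul_add, Finset.sum_add_distrib]

lemma frobInner_sub_right (M N P : Matrix α β ℝ) :
    frobInner M (N - P) = frobInner M N - frobInner M P := by
  simp [frobInner_eq, Matrix.sub_apply, mul_sub, Finset.sum_sub_distrib]

lemma frobInner_smul_right (c : ℝ) (M N : Matrix α β ℝ) :
    frobInner M (c • N) = c * frobInner M N := by
  simp [frobInner_eq, Matrix.smul_apply, Finset.mul_sum]; ring_nf
  congr 1; ext j; congr 1; ext k; ring

lemma frobInner_zero_right (M : Matrix α β ℝ) : frobInner M 0 = 0 := by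
  simp [frobInner_eq]

lemma frobInner_zero_left (M : Matrix α β ℝ) : frobInner 0 M = 0 := by
  rw [frobInner_comm]; exact frobInner_zero_right M

lemma frobInner_neg_left (M N : Matrix α β ℝ) : frobInner (-M) N = -frobInner M N := by
  simp [frobInner_eq, Finset.sum_neg_distrib]

lemma frobInner_neg_right (M N : Matrix α β ℝ) : frobInner M (-N) = -frobInner M N := by
  rw [frobInner_comm, frobInner_neg_left, frobInner_comm]

lemma frobInner_sum_right {ι : Type*} (s : Finset ι) (M : Matrix α β ℝ)
    (N : ι → Matrix α β ℝ) :
    frobInner M (∑ j ∈ s, N j) = ∑ j ∈ s, frobInner M (N j) := by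
  classical
  induction s using Finset.induction with
  | empty => simp [frobInner_zero_right]
  | insert _ _ h ih => simp [Finset.sum_insert h, frobInner_add_right, ih]

lemma frobInner_sum_left {ι : Type*} (s : Finset ι) (M : Matrix α β ℝ)
    (N : ι → Matrix α β ℝ) :
    frobInner (∑ j ∈ s, N j) M = ∑ j ∈ s, frobInner (N j) M := by
  rw [frobInner_comm, frobInner_sum_right]
  exact Finset.sum_congr rfl fun j _ => frobInner_comm _ _

lemma frobSq_nonneg (M : Matrix α β ℝ) : 0 ≤ frobSq M := by
  rw [frobSq_eq, frobInner_eq]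
  exact Finset.sum_nonneg fun j _ => Finset.sum_nonneg fun k _ => mul_self_nonneg _

lemma frobSq_eq_zero {M : Matrix α β ℝ} (h : frobSq M = 0) : M = 0 := by
  rw [frobSq_eq, frobInner_eq] at h
  ext k j
  have h1 : ∀ j' ∈ Finset.univ, (0:ℝ) ≤ ∑ k', M k' j' * M k' j' :=
    fun j' _ => Finset.sum_nonneg fun k' _ => mul_self_nonneg _
  have h2 := (Finset.sum_eq_zero_iff_of_nonneg h1).1 h j (Finset.mem_univ j)
  have h3 := (Finset.sum_eq_zero_iff_of_nonneg (fun k' _ => mul_self_nonneg (M k' j))).1 h2 k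
    (Finset.mem_univ k)
  simpa [mul_self_eq_zero] using h3

lemma frobInner_add_left (M N P : Matrix α β ℝ) :
    frobInner (M + N) P = frobInner M P + frobInner N P := by
  rw [frobInner_comm, frobInner_add_right, frobInner_comm P M, frobInner_comm P N]

lemma frobSq_add (M N : Matrix α β ℝ) :
    frobSq (M + N) = frobSq M + 2 * frobInner M N + frobSq N := by
  rw [frobSq_eq, frobInner_add_left, frobInner_add_right, frobInner_add_right,
    frobInner_comm N M, frobSq_eq, frobSq_eq]
  ring

lemma frobSq_smul (c : ℝ) (M : Matrix α β ℝ) : frobSq (c • M) = c ^ 2 * frobSq M := by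
  rw [frobSq_eq, frobInner_smul_right, frobInner_comm, frobInner_smul_right,
    frobInner_comm, frobSq_eq]
  ring

lemma frobSq_add_smul (t : ℝ) (P Q : Matrix α β ℝ) :
    frobSq (P + t • Q) = frobSq P + frobSq Q * t ^ 2 + (2 * frobInner P Q) * t := by
  rw [frobSq_add, frobInner_smul_right, frobSq_smul]
  ring

lemma frobInner_transpose_mul {γ : Type*} [Fintype γ] (A : Matrix γ α ℝ)
    (G : Matrix γ β ℝ) (Y : Matrix α β ℝ) :
    frobInner (Aᵀ * G) Y = frobInner G (A * Y) := by
  simp [frobInner, Matrix.transpose_mul, Matrix.mul_assoc]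

lemma frobInner_mul_right {γ : Type*} [Fintype γ] (S : Matrix α β ℝ)
    (X : Matrix α γ ℝ) (B : Matrix γ β ℝ) :
    frobInner S (X * B) = frobInner (S * Bᵀ) X := by
  simp only [frobInner, Matrix.transpose_mul, Matrix.transpose_transpose]
  rw [← Matrix.mul_assoc]
  exact Matrix.trace_mul_cycle Sᵀ X B

end FrobAux

section LapAux
variable {n : ℕ} {V : Type*} [AddCommGroup V] [Module ℝ V]

/-- The graph Laplacian applied to a tuple. -/
def lap (a : Matrix (Fin n) (Fin n) ℝ) (G : Fin n → V) (i : Fin n) : V :=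
  ∑ j, a i j • (G i - G j)

variable {a : Matrix (Fin n) (Fin n) ℝ}

lemma lap_sum (hsym : ∀ i j, a i j = a j i) (G : Fin n → V) : ∑ i, lap a G i = 0 := by
  unfold lap
  simp only [smul_sub, Finset.sum_sub_distrib]
  rw [sub_eq_zero, Finset.sum_comm]
  refine Finset.sum_congr rfl fun i _ => Finset.sum_congr rfl fun j _ => ?_
  rw [hsym]

lemma lap_add (G H : Fin n → V) (i : Fin n) :
    lap a (fun k => G k + H k) i = lap a G i + lap a H i := by
  unfold lap
  rw [← Finset.sum_add_distrib]
  refine Finset.sum_congr rfl fun j _ => ?_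
  rw [← smul_add]; congr 1; exact add_sub_add_comm _ _ _ _

lemma lap_smul (c : ℝ) (G : Fin n → V) (i : Fin n) :
    lap a (fun k => c • G k) i = c • lap a G i := by
  unfold lap
  rw [Finset.smul_sum]
  refine Finset.sum_congr rfl fun j _ => ?_
  rw [← smul_sub, smul_comm]

lemma lap_add_smul (t : ℝ) (G H : Fin n → V) (i : Fin n) :
    lap a (fun k => G k + t • H k) i = lap a G i + t • lap a H i := by
  rw [lap_add G (fun k => t • H k) i, lap_smul t H i]

lemma lap_sub (G H : Fin n → V) (i : Fin n) :
    lap a (fun k => G k - H k) i = lap a G i - lap a H i := by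
  have h := lap_add (a := a) (fun k => G k - H k) H i
  simp only [sub_add_cancel] at h
  rw [h]; abel

lemma lap_const (v : V) (i : Fin n) : lap a (fun _ => v) i = 0 := by
  simp [lap]

lemma pert_cancel (t : ℝ) {E Xb Lz e xb lz : V} (h1 : E - Xb - Lz = 0)
    (h2 : e - xb - lz = 0) :
    (E + t • e) - (Xb + t • xb) - (Lz + t • lz) = 0 := by
  have h3 : (E + t • e) - (Xb + t • xb) - (Lz + t • lz)
      = (E - Xb - Lz) + t • (e - xb - lz) := by
    rw [smul_sub, smul_sub]; abel
  rw [h3, h1, h2, smul_zero, add_zero]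

end LapAux

lemma quad_trick {A B : ℝ} (hA : 0 ≤ A) (h : ∀ t : ℝ, 0 ≤ A * t ^ 2 + B * t) : B = 0 := by
  have hpos : (0:ℝ) < A + 1 := by linarith
  have h1 := h (-B / (A + 1))
  have key : A * (-B/(A+1))^2 + B * (-B/(A+1)) = -(B^2/(A+1)^2) * (1) := by
    field_simp
    ring
  rw [key] at h1
  have h2 : B^2 / (A+1)^2 ≤ 0 := by linarith
  have h3 : 0 < (A+1)^2 := by positivity
  have h4 : B^2 ≤ 0 := by
    by_contra hc
    push_neg at hc
    have := div_pos hc h3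
    linarith
  have h5 : B^2 = 0 := le_antisymm h4 (sq_nonneg B)
  exact pow_eq_zero_iff (by norm_num) |>.1 h5

section ScalarLap
variable {n : ℕ} (a : Matrix (Fin n) (Fin n) ℝ)

/-- Scalar graph Laplacian as a linear map. -/
def lapL : (Fin n → ℝ) →ₗ[ℝ] (Fin n → ℝ) where
  toFun x := fun i => ∑ j, a i j * (x i - x j)
  map_add' x y := by
    ext i
    simp only [Pi.add_apply]
    rw [← Finset.sum_add_distrib]
    exact Finset.sum_congr rfl fun j _ => by ring
  map_smul' c x := by
    ext i
    simp [Finset.mul_sum]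
    refine Finset.sum_congr rfl fun j _ => ?_
    ring

/-- Sum-of-coordinates linear map. -/
def sumL : (Fin n → ℝ) →ₗ[ℝ] ℝ where
  toFun x := ∑ i, x i
  map_add' x y := by simp [Finset.sum_add_distrib]
  map_smul' c x := by simp [Finset.mul_sum]

lemma lapL_mean_zero (hsym : ∀ i j, a i j = a j i) (x : Fin n → ℝ) :
    ∑ i, lapL a x i = 0 := by
  simp only [lapL, LinearMap.coe_mk, AddHom.coe_mk]
  simp only [mul_sub, Finset.sum_sub_distrib]
  rw [sub_eq_zero, Finset.sum_comm]
  exact Finset.sum_congr rfl fun i _ => Finset.sum_congr rfl fun j _ => by rw [hsym]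

lemma lapL_ker (hsym : ∀ i j, a i j = a j i) (hnonneg : ∀ i j, 0 ≤ a i j)
    (hconn : GraphConnected a) {x : Fin n → ℝ} (hx : lapL a x = 0) (i j : Fin n) :
    x i = x j := by
  have hq : ∑ i, ∑ j, a i j * (x i - x j) ^ 2 = 0 := by
    have h0 : ∑ i, x i * (lapL a x i) = 0 := by
      rw [hx]; simp
    simp only [lapL, LinearMap.coe_mk, AddHom.coe_mk] at h0
    have expand : ∑ i, ∑ j, a i j * (x i - x j) ^ 2
        = 2 * ∑ i, x i * ∑ j, a i j * (x i - x j) := by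
      have swap : ∑ i, ∑ j, a i j * (x j * (x j - x i))
          = ∑ i, ∑ j, a i j * (x i * (x i - x j)) := by
        rw [Finset.sum_comm]
        exact Finset.sum_congr rfl fun i _ => Finset.sum_congr rfl fun j _ => by rw [hsym]
      calc ∑ i, ∑ j, a i j * (x i - x j) ^ 2
          = ∑ i, ∑ j, (a i j * (x i * (x i - x j)) + a i j * (x j * (x j - x i))) := by
            refine Finset.sum_congr rfl fun i _ => Finset.sum_congr rfl fun j _ => by ring
        _ = ∑ i, ∑ j, a i j * (x i * (x i - x j)) + ∑ i, ∑ j, a i j * (x j * (x j - x i)) := by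
            simp [Finset.sum_add_distrib]
        _ = 2 * ∑ i, x i * ∑ j, a i j * (x i - x j) := by
            rw [swap]
            have hST : ∑ i, ∑ j, a i j * (x i * (x i - x j))
                = ∑ i, x i * ∑ j, a i j * (x i - x j) := by
              refine Finset.sum_congr rfl fun i _ => ?_
              rw [Finset.mul_sum]
              exact Finset.sum_congr rfl fun j _ => by ring
            rw [hST]; ring
    rw [expand, h0, mul_zero]
  have hterm : ∀ u v : Fin n, a u v * (x u - x v) ^ 2 = 0 := by
    have h1 : ∀ u ∈ Finset.univ, (0:ℝ) ≤ ∑ v, a u v * (x u - x v) ^ 2 :=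
      fun u _ => Finset.sum_nonneg fun v _ => mul_nonneg (hnonneg u v) (sq_nonneg _)
    intro u v
    have h2 := (Finset.sum_eq_zero_iff_of_nonneg h1).1 hq u (Finset.mem_univ u)
    exact (Finset.sum_eq_zero_iff_of_nonneg
      (fun v _ => mul_nonneg (hnonneg u v) (sq_nonneg _))).1 h2 v (Finset.mem_univ v)
  have step : ∀ u v : Fin n, (u ≠ v ∧ 0 < a u v) → x u = x v := by
    intro u v ⟨_, hpos⟩
    have h2 : (x u - x v) ^ 2 = 0 := by
      rcases mul_eq_zero.1 (hterm u v) with h | h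
      · exact absurd h (ne_of_gt hpos)
      · exact h
    have h3 := pow_eq_zero_iff (n := 2) (by norm_num) |>.1 h2
    linarith [sub_eq_zero.1 h3]
  induction hconn i j with
  | refl => rfl
  | tail _ hstep ih => exact ih.trans (step _ _ hstep)

/-- Surjectivity of the scalar Laplacian onto mean-zero vectors. -/
lemma lapL_surj (hn : 0 < n) (hsym : ∀ i j, a i j = a j i) (hnonneg : ∀ i j, 0 ≤ a i j)
    (hconn : GraphConnected a) (v : Fin n → ℝ) (hv : ∑ i, v i = 0) :
    ∃ x : Fin n → ℝ, lapL a x = v := by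
  have hrange_le : LinearMap.range (lapL a) ≤ LinearMap.ker (sumL (n := n)) := by
    rintro _ ⟨x, rfl⟩
    simpa [sumL] using lapL_mean_zero a hsym x
  have hker_le : LinearMap.ker (lapL a) ≤ Submodule.span ℝ {(fun _ => (1:ℝ) : Fin n → ℝ)} := by
    intro x hx
    rw [LinearMap.mem_ker] at hx
    have hconst : x = fun _ => x ⟨0, hn⟩ := by
      funext i
      exact lapL_ker a hsym hnonneg hconn hx i ⟨0, hn⟩
    rw [hconst, Submodule.mem_span_singleton]
    exact ⟨x ⟨0, hn⟩, by funext i; simp⟩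
  have hsum_surj : Function.Surjective (sumL (n := n)) := by
    intro r
    refine ⟨fun _ => r / n, ?_⟩
    simp [sumL]
    field_simp
  have hrank_sum : Module.finrank ℝ (LinearMap.ker (sumL (n := n))) = n - 1 := by
    have h1 := LinearMap.finrank_range_add_finrank_ker (sumL (n := n))
    rw [LinearMap.range_eq_top.2 hsum_surj] at h1
    simp at h1
    omega
  have hrank_lap : n - 1 ≤ Module.finrank ℝ (LinearMap.range (lapL a)) := by
    have h1 := LinearMap.finrank_range_add_finrank_ker (lapL a)
    have h2 : Module.finrank ℝ (LinearMap.ker (lapL a)) ≤ 1 := by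
      calc Module.finrank ℝ (LinearMap.ker (lapL a))
          ≤ Module.finrank ℝ (Submodule.span ℝ {(fun _ => (1:ℝ) : Fin n → ℝ)}) :=
            Submodule.finrank_mono hker_le
        _ ≤ 1 := by
            simpa using finrank_span_le_card ({(fun _ => (1:ℝ))} : Set (Fin n → ℝ))
    simp at h1
    omega
  have heq : LinearMap.range (lapL a) = LinearMap.ker (sumL (n := n)) := by
    apply Submodule.eq_of_le_of_finrank_le hrange_le
    rw [hrank_sum]
    exact hrank_lap
  have hv' : v ∈ LinearMap.ker (sumL (n := n)) := by simpa [sumL] using hv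
  rw [← heq] at hv'
  exact hv'

end ScalarLap

section MatLap
variable {n : ℕ} {α β : Type*} [Fintype α] [Fintype β] (a : Matrix (Fin n) (Fin n) ℝ)

lemma lap_apply_entry (G : Fin n → Matrix α β ℝ) (i : Fin n) (k : α) (l : β) :
    lap a G i k l = lapL a (fun i' => G i' k l) i := by
  simp only [lap, lapL, LinearMap.coe_mk, AddHom.coe_mk]
  rw [Matrix.sum_apply]
  exact Finset.sum_congr rfl fun j _ => by
    simp [Matrix.smul_apply, Matrix.sub_apply, mul_sub]

/-- Matrix-valued Laplacian surjectivity. -/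
lemma lap_surj_mat (hn : 0 < n) (hsym : ∀ i j, a i j = a j i) (hnonneg : ∀ i j, 0 ≤ a i j)
    (hconn : GraphConnected a) (M : Fin n → Matrix α β ℝ) (hM : ∑ i, M i = 0) :
    ∃ G : Fin n → Matrix α β ℝ, ∀ i, lap a G i = M i := by
  have hent : ∀ (k : α) (l : β), ∃ x : Fin n → ℝ, lapL a x = fun i => M i k l := by
    intro k l
    refine lapL_surj a hn hsym hnonneg hconn _ ?_
    have h := congrFun (congrFun hM k) l
    rw [Matrix.sum_apply] at h
    simpa using h
  choose x hx using hent
  refine ⟨fun i => Matrix.of fun k l => x k l i, fun i => ?_⟩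
  ext k l
  rw [lap_apply_entry]
  have h := congrFun (hx k l) i
  simpa using h

/-- Matrix-valued Laplacian kernel: consensus. -/
lemma lap_ker_mat (hsym : ∀ i j, a i j = a j i) (hnonneg : ∀ i j, 0 ≤ a i j)
    (hconn : GraphConnected a) {G : Fin n → Matrix α β ℝ} (h : ∀ i, lap a G i = 0)
    (i j : Fin n) : G i = G j := by
  ext k l
  refine lapL_ker a hsym hnonneg hconn (x := fun i' => G i' k l) ?_ i j
  funext i'
  rw [← lap_apply_entry, h i']
  simp

/-- Self-adjointness of the Laplacian w.r.t. the Frobenius pairing. -/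
lemma lap_adjoint (hsym : ∀ i j, a i j = a j i) (P Q : Fin n → Matrix α β ℝ) :
    ∑ i, frobInner (P i) (lap a Q i) = ∑ i, frobInner (lap a P i) (Q i) := by
  have expandR : ∑ i, frobInner (P i) (lap a Q i)
      = ∑ i, ∑ j, a i j * (frobInner (P i) (Q i) - frobInner (P i) (Q j)) := by
    refine Finset.sum_congr rfl fun i _ => ?_
    rw [lap, frobInner_sum_right]
    refine Finset.sum_congr rfl fun j _ => ?_
    rw [frobInner_smul_right, frobInner_sub_right]
  rw [expandR]
  have expandL : ∑ i, frobInner (lap a P i) (Q i)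
      = ∑ i, ∑ j, a i j * (frobInner (P i) (Q i) - frobInner (P j) (Q i)) := by
    refine Finset.sum_congr rfl fun i _ => ?_
    rw [frobInner_comm, lap, frobInner_sum_right]
    refine Finset.sum_congr rfl fun j _ => ?_
    rw [frobInner_smul_right, frobInner_sub_right,
      frobInner_comm (Q i) (P i), frobInner_comm (Q i) (P j)]
  rw [expandL]
  simp only [mul_sub, Finset.sum_sub_distrib]
  congr 1
  rw [Finset.sum_comm]
  refine Finset.sum_congr rfl fun i _ => Finset.sum_congr rfl fun j _ => ?_
  rw [hsym, frobInner_comm]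

end MatLap

section EmbAux
variable {n : ℕ} {d : Fin n → ℕ} {β : Type*} [Fintype β]

omit [Fintype β] in
lemma rowBlk_blockRows (M : ∀ i, Matrix (Fin (d i)) β ℝ) (i : Fin n) :
    rowBlk (blockRows M) i = M i := rfl

omit [Fintype β] in
lemma embedRow_apply_ne (i : Fin n) (M : Matrix (Fin (d i)) β ℝ)
    (s : (i' : Fin n) × Fin (d i')) (j : β) (h : s.1 ≠ i) :
    embedRow i M s j = 0 := by
  simp [embedRow, h]

omit [Fintype β] in
lemma embedRow_add (i : Fin n) (M N : Matrix (Fin (d i)) β ℝ) :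
    embedRow i (M + N) = embedRow i M + embedRow i N := by
  ext s j
  rcases s with ⟨i', k⟩
  by_cases h : i' = i
  · subst h; simp [embedRow]
  · simp [embedRow, h]

omit [Fintype β] in
lemma embedRow_smul (i : Fin n) (c : ℝ) (M : Matrix (Fin (d i)) β ℝ) :
    embedRow i (c • M) = c • embedRow i M := by
  ext s j
  rcases s with ⟨i', k⟩
  by_cases h : i' = i
  · subst h; simp [embedRow]
  · simp [embedRow, h]

omit [Fintype β] in
lemma embedRow_zero (i : Fin n) : embedRow i (0 : Matrix (Fin (d i)) β ℝ) = 0 := by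
  ext s j
  rcases s with ⟨i', k⟩
  by_cases h : i' = i
  · subst h; simp [embedRow]
  · simp [embedRow, h]

omit [Fintype β] in
lemma embedRow_sub (i : Fin n) (M N : Matrix (Fin (d i)) β ℝ) :
    embedRow i (M - N) = embedRow i M - embedRow i N := by
  ext s j
  rcases s with ⟨i', k⟩
  by_cases h : i' = i
  · subst h; simp [embedRow]
  · simp [embedRow, h]

omit [Fintype β] in
lemma rowBlk_neg (M : Matrix ((i : Fin n) × Fin (d i)) β ℝ) (i : Fin n) :
    rowBlk (-M) i = -(rowBlk M i) := by
  ext k j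
  simp [rowBlk]

lemma sum_embedRow_rowBlk (M : Matrix ((i : Fin n) × Fin (d i)) β ℝ) :
    ∑ i, embedRow i (rowBlk M i) = M := by
  ext s j
  rcases s with ⟨i', k⟩
  rw [Matrix.sum_apply]
  rw [Finset.sum_eq_single i']
  · simp [embedRow, rowBlk]
  · intro b _ hb
    exact embedRow_apply_ne b _ ⟨i', k⟩ j hb.symm
  · simp

lemma frobInner_embedRow (i : Fin n) (M : Matrix (Fin (d i)) β ℝ)
    (N : Matrix ((i' : Fin n) × Fin (d i')) β ℝ) :
    frobInner (embedRow i M) N = frobInner M (rowBlk N i) := by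
  rw [frobInner_eq, frobInner_eq]
  refine Finset.sum_congr rfl fun j _ => ?_
  rw [← Finset.univ_sigma_univ, Finset.sum_sigma]
  rw [Finset.sum_eq_single i]
  · refine Finset.sum_congr rfl fun k _ => ?_
    simp [embedRow, rowBlk]
  · intro b _ hb
    refine Finset.sum_eq_zero fun k _ => ?_
    simp [embedRow, hb]
  · simp

lemma frobInner_blockRows (H : ∀ i, Matrix (Fin (d i)) β ℝ)
    (N : Matrix ((i' : Fin n) × Fin (d i')) β ℝ) :
    frobInner (blockRows H) N = ∑ i, frobInner (H i) (rowBlk N i) := by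
  conv_lhs => rw [← sum_embedRow_rowBlk (blockRows H)]
  rw [frobInner_sum_left]
  exact Finset.sum_congr rfl fun i _ => by rw [rowBlk_blockRows, frobInner_embedRow]

end EmbAux


lemma sum_frobSq_perturb {ι α β : Type*} [Fintype α] [Fintype β] (s : Finset ι) (t : ℝ)
    (P Q : ι → Matrix α β ℝ) :
    ∑ i ∈ s, frobSq (P i + t • Q i)
      = ∑ i ∈ s, frobSq (P i) + (∑ i ∈ s, frobSq (Q i)) * t ^ 2
        + (2 * ∑ i ∈ s, frobInner (P i) (Q i)) * t := by
  rw [Finset.sum_congr rfl fun i _ => frobSq_add_smul t (P i) (Q i)]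
  rw [Finset.sum_add_distrib, Finset.sum_add_distrib, ← Finset.sum_mul, ← Finset.sum_mul,
    Finset.mul_sum]

set_option maxHeartbeats 1000000 in
theorem stmt_12 (n p : ℕ) (hn : 0 < n) (rdim qdim mdim : Fin n → ℕ)
    (a : Matrix (Fin n) (Fin n) ℝ)
    (hsym : ∀ i j, a i j = a j i) (hnonneg : ∀ i j, 0 ≤ a i j)
    (hdiag : ∀ i, a i i = 0) (hconn : GraphConnected a)
    (Al : ∀ i, Matrix ((i' : Fin n) × Fin (mdim i')) (Fin (rdim i)) ℝ)
    (Bl : ∀ i, Matrix (Fin p) (Fin (qdim i)) ℝ)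
    (Fv : ∀ i, Matrix (Fin (mdim i)) ((i' : Fin n) × Fin (qdim i')) ℝ)
    (X : Fin n → Matrix ((i : Fin n) × Fin (rdim i)) (Fin p) ℝ)
    (Yv : ∀ i, Matrix (Fin (rdim i)) ((i' : Fin n) × Fin (qdim i')) ℝ)
    (Z : Fin n → Matrix ((i : Fin n) × Fin (rdim i)) ((i' : Fin n) × Fin (qdim i')) ℝ)
    (U W : Fin n → Matrix ((i : Fin n) × Fin (mdim i)) ((i' : Fin n) × Fin (qdim i')) ℝ) :
    (CCRfeas a Bl X Yv Z U W ∧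
        ∀ X' : Fin n → Matrix ((i : Fin n) × Fin (rdim i)) (Fin p) ℝ,
          ∀ Yv' : ∀ i, Matrix (Fin (rdim i)) ((i' : Fin n) × Fin (qdim i')) ℝ,
            ∀ Z' : Fin n → Matrix ((i : Fin n) × Fin (rdim i)) ((i' : Fin n) × Fin (qdim i')) ℝ,
              ∀ U' W' : Fin n → Matrix ((i : Fin n) × Fin (mdim i)) ((i' : Fin n) × Fin (qdim i')) ℝ,
                CCRfeas a Bl X' Yv' Z' U' W' →
                  CCRobj Al Fv Yv U ≤ CCRobj Al Fv Yv' U') ↔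
      (∃ L1 : Fin n → Matrix ((i : Fin n) × Fin (rdim i)) (Fin p) ℝ,
        ∃ L2 : Fin n → Matrix ((i : Fin n) × Fin (mdim i)) ((i' : Fin n) × Fin (qdim i')) ℝ,
          ∃ L3 : Fin n → Matrix ((i : Fin n) × Fin (rdim i)) ((i' : Fin n) × Fin (qdim i')) ℝ,
            CCRequil a Al Bl Fv X Yv Z U W L1 L2 L3) := by
  classical
  constructor
  · -- optimal ⇒ equilibrium
    rintro ⟨⟨hfe1, hfe2, hfe3⟩, hopt⟩
    obtain ⟨G, hGdef⟩ :
        ∃ G : Fin n → Matrix ((i : Fin n) × Fin (mdim i)) ((i' : Fin n) × Fin (qdim i')) ℝ,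
          G = fun i => Al i * Yv i - embedRow i (Fv i) - U i := ⟨_, rfl⟩
    obtain ⟨H, hHdef⟩ :
        ∃ H : ∀ i, Matrix (Fin (rdim i)) ((i' : Fin n) × Fin (qdim i')) ℝ,
          H = fun i => (Al i)ᵀ * G i := ⟨_, rfl⟩
    obtain ⟨Bfull, hBdef⟩ :
        ∃ Bfull : Matrix (Fin p) ((i' : Fin n) × Fin (qdim i')) ℝ,
          Bfull = ∑ i, embedCol i (Bl i) := ⟨_, rfl⟩
    have hlapX : ∀ i, lap a X i = 0 := by
      intro i
      exact Finset.sum_eq_zero fun j _ => by rw [hfe1 i j, sub_self, smul_zero]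
    -- Step A : lap G = 0
    have hGlap : ∀ i, lap a G i = 0 := by
      have hkey : ∀ Wh : Fin n → Matrix ((i : Fin n) × Fin (mdim i))
          ((i' : Fin n) × Fin (qdim i')) ℝ,
          ∑ i, frobInner (lap a G i) (Wh i) = 0 := by
        intro Wh
        have hq : ∀ t : ℝ, 0 ≤ (∑ i, frobSq (-(lap a Wh i))) * t ^ 2
            + (2 * ∑ i, frobInner (G i) (-(lap a Wh i))) * t := by
          intro t
          have hfeas' : CCRfeas a Bl X Yv Z (fun i => U i + t • lap a Wh i)
              (fun i => W i + t • Wh i) := by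
            refine ⟨hfe1, fun i => ?_, hfe3⟩
            show U i + t • lap a Wh i
              = ∑ j, a i j • ((W i + t • Wh i) - (W j + t • Wh j))
            rw [show (∑ j, a i j • ((W i + t • Wh i) - (W j + t • Wh j)))
                = lap a (fun k => W k + t • Wh k) i from rfl, lap_add_smul]
            rw [hfe2 i]
            rfl
          have h1 := hopt X Yv Z _ _ hfeas'
          have hobj : CCRobj Al Fv Yv (fun i => U i + t • lap a Wh i)
              = CCRobj Al Fv Yv U + (∑ i, frobSq (-(lap a Wh i))) * t ^ 2
                + (2 * ∑ i, frobInner (G i) (-(lap a Wh i))) * t := by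
            unfold CCRobj
            calc ∑ i, frobSq (Al i * Yv i - embedRow i (Fv i) - (U i + t • lap a Wh i))
                = ∑ i, frobSq (G i + t • (-(lap a Wh i))) := by
                  refine Finset.sum_congr rfl fun i _ => ?_
                  congr 1
                  simp only [hGdef, smul_neg]
                  abel
              _ = ∑ i, frobSq (G i) + (∑ i, frobSq (-(lap a Wh i))) * t ^ 2
                    + (2 * ∑ i, frobInner (G i) (-(lap a Wh i))) * t :=
                  sum_frobSq_perturb Finset.univ t G (fun i => -(lap a Wh i))
              _ = _ := by simp only [hGdef]
          rw [hobj] at h1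
          linarith
        have hAnn : (0:ℝ) ≤ ∑ i, frobSq (-(lap a Wh i)) :=
          Finset.sum_nonneg fun i _ => frobSq_nonneg _
        have hB := quad_trick hAnn hq
        have hB' : ∑ i, frobInner (G i) (lap a Wh i) = 0 := by
          have h2 : ∑ i, frobInner (G i) (-(lap a Wh i))
              = -∑ i, frobInner (G i) (lap a Wh i) := by
            rw [← Finset.sum_neg_distrib]
            exact Finset.sum_congr rfl fun i _ => frobInner_neg_right _ _
          rw [h2] at hB
          linarith
        rw [← lap_adjoint a hsym G Wh]
        exact hB'
      intro i
      have h0 := hkey (fun k => lap a G k)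
      have h2 : ∑ i, frobSq (lap a G i) = 0 := by
        rw [← h0]
        exact Finset.sum_congr rfl fun i _ => frobSq_eq _
      exact frobSq_eq_zero
        ((Finset.sum_eq_zero_iff_of_nonneg fun i _ => frobSq_nonneg _).1 h2 i (Finset.mem_univ i))
    -- Step B : blockRows H * Bfullᵀ = 0
    have hSB : blockRows H * Bfullᵀ = 0 := by
      have hkey : ∀ Xh : Matrix ((i : Fin n) × Fin (rdim i)) (Fin p) ℝ,
          frobInner (blockRows H * Bfullᵀ) Xh = 0 := by
        intro Xh
        have hsum0 : ∑ i, (embedRow i (rowBlk (Xh * Bfull) i) - Xh * embedCol i (Bl i)) = 0 := by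
          rw [Finset.sum_sub_distrib, sum_embedRow_rowBlk, ← Matrix.mul_sum, ← hBdef, sub_self]
        obtain ⟨Zh, hZh⟩ := lap_surj_mat a hn hsym hnonneg hconn _ hsum0
        have hq : ∀ t : ℝ, 0 ≤ (∑ i, frobSq (Al i * rowBlk (Xh * Bfull) i)) * t ^ 2
            + (2 * ∑ i, frobInner (G i) (Al i * rowBlk (Xh * Bfull) i)) * t := by
          intro t
          have hfeas' : CCRfeas a Bl (fun i => X i + t • Xh)
              (fun i => Yv i + t • rowBlk (Xh * Bfull) i) (fun i => Z i + t • Zh i) U W := by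
            refine ⟨fun i j => by show X i + t • Xh = X j + t • Xh; rw [hfe1 i j],
              hfe2, fun i => ?_⟩
            show embedRow i (Yv i + t • rowBlk (Xh * Bfull) i)
                - (X i + t • Xh) * embedCol i (Bl i)
                - (∑ j, a i j • ((Z i + t • Zh i) - (Z j + t • Zh j))) = 0
            rw [embedRow_add, embedRow_smul, Matrix.add_mul, Matrix.smul_mul]
            rw [show (∑ j, a i j • ((Z i + t • Zh i) - (Z j + t • Zh j)))
                = lap a (fun k => Z k + t • Zh k) i from rfl, lap_add_smul]
            exact pert_cancel t (hfe3 i) (by rw [hZh i, sub_self])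
          have h1 := hopt _ _ _ _ _ hfeas'
          have hobj : CCRobj Al Fv (fun i => Yv i + t • rowBlk (Xh * Bfull) i) U
              = CCRobj Al Fv Yv U + (∑ i, frobSq (Al i * rowBlk (Xh * Bfull) i)) * t ^ 2
                + (2 * ∑ i, frobInner (G i) (Al i * rowBlk (Xh * Bfull) i)) * t := by
            unfold CCRobj
            calc ∑ i, frobSq (Al i * (Yv i + t • rowBlk (Xh * Bfull) i)
                    - embedRow i (Fv i) - U i)
                = ∑ i, frobSq (G i + t • (Al i * rowBlk (Xh * Bfull) i)) := by
                  refine Finset.sum_congr rfl fun i _ => ?_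
                  congr 1
                  rw [Matrix.mul_add, Matrix.mul_smul]
                  simp only [hGdef]
                  abel
              _ = ∑ i, frobSq (G i) + (∑ i, frobSq (Al i * rowBlk (Xh * Bfull) i)) * t ^ 2
                    + (2 * ∑ i, frobInner (G i) (Al i * rowBlk (Xh * Bfull) i)) * t :=
                  sum_frobSq_perturb Finset.univ t G _
              _ = _ := by simp only [hGdef]
          rw [hobj] at h1
          linarith
        have hAnn : (0:ℝ) ≤ ∑ i, frobSq (Al i * rowBlk (Xh * Bfull) i) :=
          Finset.sum_nonneg fun i _ => frobSq_nonneg _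
        have hB := quad_trick hAnn hq
        have hB' : ∑ i, frobInner (G i) (Al i * rowBlk (Xh * Bfull) i) = 0 := by linarith
        calc frobInner (blockRows H * Bfullᵀ) Xh
            = frobInner (blockRows H) (Xh * Bfull) := (frobInner_mul_right _ _ _).symm
          _ = ∑ i, frobInner (H i) (rowBlk (Xh * Bfull) i) := frobInner_blockRows _ _
          _ = ∑ i, frobInner (G i) (Al i * rowBlk (Xh * Bfull) i) := by
              refine Finset.sum_congr rfl fun i _ => ?_
              rw [hHdef]
              exact frobInner_transpose_mul (Al i) (G i) _
          _ = 0 := hB'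
      have := hkey (blockRows H * Bfullᵀ)
      rw [← frobSq_eq] at this
      exact frobSq_eq_zero this
    -- Step C : construct L1
    have hsumL1 : ∑ i, (-(blockRows H)) * (embedCol i (Bl i))ᵀ = 0 := by
      rw [← Matrix.mul_sum]
      rw [show (∑ i, (embedCol i (Bl i))ᵀ) = Bfullᵀ from by
        rw [hBdef, Matrix.transpose_sum]]
      rw [Matrix.neg_mul, hSB, neg_zero]
    obtain ⟨L1, hL1⟩ := lap_surj_mat a hn hsym hnonneg hconn _ hsumL1
    refine ⟨L1, G, fun _ => -(blockRows H), fun i => ?_⟩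
    have hrhsY : CCRrhsY Al Fv Yv U (fun _ => -(blockRows H)) i = 0 := by
      unfold CCRrhsY
      rw [rowBlk_neg, rowBlk_blockRows]
      simp only [hHdef, hGdef]
      abel
    have hrhsU : CCRrhsU Al Fv Yv U G i = 0 := by
      unfold CCRrhsU
      simp only [hGdef]
      abel
    refine ⟨?_, hrhsY, hrhsU, ?_, ?_, ?_, ?_, ?_⟩
    · -- rhsX
      unfold CCRrhsX
      rw [show (∑ j, a i j • (L1 i - L1 j)) = lap a L1 i from rfl, hL1 i,
        show (∑ j, a i j • (X i - X j)) = lap a X i from rfl, hlapX i]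
      abel
    · -- rhsW
      show lap a G i = 0
      exact hGlap i
    · -- rhsZ
      show lap a (fun _ => -(blockRows H)) i = 0
      exact lap_const _ i
    · -- rhsL1
      show lap a X i = 0
      exact hlapX i
    · -- rhsL2
      unfold CCRrhsL2
      rw [hrhsU, add_zero]
      rw [show (∑ j, a i j • (G i - G j)) = lap a G i from rfl, hGlap i, sub_zero]
      rw [← hfe2 i, sub_self]
    · -- rhsL3
      unfold CCRrhsL3
      rw [hrhsY, embedRow_zero, add_zero]
      rw [show (∑ j, a i j • ((fun _ => -(blockRows H)) i - (fun _ => -(blockRows H)) j))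
        = lap a (fun _ => -(blockRows H)) i from rfl, lap_const, sub_zero]
      exact hfe3 i
  · -- equilibrium ⇒ optimal
    rintro ⟨L1, L2, L3, heq⟩
    have hrX : ∀ i, CCRrhsX a Bl X L1 L3 i = 0 := fun i => (heq i).1
    have hrY : ∀ i, CCRrhsY Al Fv Yv U L3 i = 0 := fun i => (heq i).2.1
    have hrU : ∀ i, CCRrhsU Al Fv Yv U L2 i = 0 := fun i => (heq i).2.2.1
    have hrW : ∀ i, CCRrhsW a L2 i = 0 := fun i => (heq i).2.2.2.1
    have hrZ : ∀ i, CCRrhsZ a L3 i = 0 := fun i => (heq i).2.2.2.2.1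
    have hrL1 : ∀ i, CCRrhsL1 a X i = 0 := fun i => (heq i).2.2.2.2.2.1
    have hrL2 : ∀ i, CCRrhsL2 a Al Fv Yv U W L2 i = 0 := fun i => (heq i).2.2.2.2.2.2.1
    have hrL3 : ∀ i, CCRrhsL3 a Al Bl Fv X Yv Z U L2 L3 i = 0 :=
      fun i => (heq i).2.2.2.2.2.2.2
    obtain ⟨G, hGdef⟩ :
        ∃ G : Fin n → Matrix ((i : Fin n) × Fin (mdim i)) ((i' : Fin n) × Fin (qdim i')) ℝ,
          G = fun i => Al i * Yv i - embedRow i (Fv i) - U i := ⟨_, rfl⟩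
    have hL2G : ∀ i, L2 i = G i := by
      intro i
      have h := hrU i
      unfold CCRrhsU at h
      rw [hGdef]
      exact (sub_eq_zero.mp h).symm
    have hlapL2 : ∀ i, lap a L2 i = 0 := fun i => hrW i
    have hlapL3 : ∀ i, lap a L3 i = 0 := fun i => hrZ i
    have hlapX : ∀ i, lap a X i = 0 := fun i => hrL1 i
    have hfe1 : ∀ i j, X i = X j := fun i j => lap_ker_mat a hsym hnonneg hconn hlapX i j
    have hfe2 : ∀ i, U i = ∑ j, a i j • (W i - W j) := by
      intro i
      have h := hrL2 i
      unfold CCRrhsL2 at h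
      rw [hrU i, add_zero] at h
      rw [show (∑ j, a i j • (L2 i - L2 j)) = lap a L2 i from rfl, hlapL2 i, sub_zero] at h
      exact sub_eq_zero.mp h
    have hfe3 : ∀ i, embedRow i (Yv i) - X i * embedCol i (Bl i)
        - ∑ j, a i j • (Z i - Z j) = 0 := by
      intro i
      have h := hrL3 i
      unfold CCRrhsL3 at h
      rw [hrY i, embedRow_zero, add_zero] at h
      rw [show (∑ j, a i j • (L3 i - L3 j)) = lap a L3 i from rfl, hlapL3 i, sub_zero] at h
      exact h
    refine ⟨⟨hfe1, hfe2, hfe3⟩, ?_⟩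
    intro X' Yv' Z' U' W' hfeas'
    obtain ⟨hf1', hf2', hf3'⟩ := hfeas'
    have hH : ∀ i, (Al i)ᵀ * G i = -(rowBlk (L3 i) i) := by
      intro i
      have h := hrY i
      unfold CCRrhsY at h
      rw [sub_eq_zero] at h
      rw [hGdef, ← h, neg_neg]
    have hlapG : ∀ i, lap a G i = 0 := by
      intro i
      have : G = L2 := funext fun k => (hL2G k).symm
      rw [this]
      exact hlapL2 i
    -- cross term vanishes
    have hcross : ∑ i, frobInner (G i) (Al i * (Yv' i - Yv i) - (U' i - U i)) = 0 := by
      have hpart2 : ∑ i, frobInner (G i) (U' i - U i) = 0 := by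
        have hdU : ∀ i, U' i - U i = lap a (fun k => W' k - W k) i := by
          intro i
          rw [lap_sub (a := a) W' W i]
          rw [hf2' i, hfe2 i]
          rfl
        rw [Finset.sum_congr rfl fun i _ => by rw [hdU i]]
        rw [lap_adjoint a hsym G (fun k => W' k - W k)]
        refine Finset.sum_eq_zero fun i _ => ?_
        rw [hlapG i, frobInner_zero_left]
      have hpart1 : ∑ i, frobInner (G i) (Al i * (Yv' i - Yv i)) = 0 := by
        have hEmb : ∀ i, embedRow i (Yv' i - Yv i)
            = (X' i - X i) * embedCol i (Bl i) + lap a (fun k => Z' k - Z k) i := by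
          intro i
          rw [embedRow_sub]
          have e' : embedRow i (Yv' i) = X' i * embedCol i (Bl i) + lap a Z' i := by
            have h := hf3' i
            rw [sub_sub, sub_eq_zero] at h
            exact h
          have e : embedRow i (Yv i) = X i * embedCol i (Bl i) + lap a Z i := by
            have h := hfe3 i
            rw [sub_sub, sub_eq_zero] at h
            exact h
          rw [e', e, Matrix.sub_mul, lap_sub (a := a) Z' Z i]
          abel
        have hmain : ∑ i, frobInner (embedRow i (Yv' i - Yv i)) (L3 i) = 0 := by
          rw [Finset.sum_congr rfl fun i _ => by rw [hEmb i, frobInner_add_left]]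
          rw [Finset.sum_add_distrib]
          have hZpart : ∑ i, frobInner (lap a (fun k => Z' k - Z k) i) (L3 i) = 0 := by
            rw [Finset.sum_congr rfl fun i _ => frobInner_comm _ _]
            rw [lap_adjoint a hsym L3 (fun k => Z' k - Z k)]
            refine Finset.sum_eq_zero fun i _ => ?_
            rw [hlapL3 i, frobInner_zero_left]
          have hXpart : ∑ i, frobInner ((X' i - X i) * embedCol i (Bl i)) (L3 i) = 0 := by
            have hDX : ∀ i, X' i - X i = X' ⟨0, hn⟩ - X ⟨0, hn⟩ := by
              intro i
              rw [hf1' i ⟨0, hn⟩, hfe1 i ⟨0, hn⟩]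
            have hXeq : ∀ i, L3 i * (embedCol i (Bl i))ᵀ = lap a L1 i + lap a X i := by
              intro i
              have h := hrX i
              unfold CCRrhsX at h
              rw [sub_sub, sub_eq_zero] at h
              exact h
            calc ∑ i, frobInner ((X' i - X i) * embedCol i (Bl i)) (L3 i)
                = ∑ i, frobInner (lap a L1 i + lap a X i) (X' ⟨0, hn⟩ - X ⟨0, hn⟩) := by
                  refine Finset.sum_congr rfl fun i _ => ?_
                  rw [frobInner_comm, frobInner_mul_right, hXeq i, hDX i]
              _ = frobInner (∑ i, (lap a L1 i + lap a X i)) (X' ⟨0, hn⟩ - X ⟨0, hn⟩) :=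
                  (frobInner_sum_left _ _ _).symm
              _ = 0 := by
                  rw [Finset.sum_add_distrib, lap_sum hsym L1, lap_sum hsym X, add_zero,
                    frobInner_zero_left]
          rw [hZpart, hXpart, add_zero]
        calc ∑ i, frobInner (G i) (Al i * (Yv' i - Yv i))
            = ∑ i, -(frobInner (embedRow i (Yv' i - Yv i)) (L3 i)) := by
              refine Finset.sum_congr rfl fun i _ => ?_
              rw [← frobInner_transpose_mul (Al i) (G i) (Yv' i - Yv i), hH i,
                frobInner_neg_left, frobInner_embedRow, frobInner_comm]
          _ = 0 := by rw [Finset.sum_neg_distrib, hmain, neg_zero]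
      rw [Finset.sum_congr rfl fun i _ => frobInner_sub_right (G i) _ _,
        Finset.sum_sub_distrib, hpart1, hpart2, sub_zero]
    -- objective comparison
    have hobj' : CCRobj Al Fv Yv' U' = CCRobj Al Fv Yv U
        + ∑ i, frobSq (Al i * (Yv' i - Yv i) - (U' i - U i)) := by
      unfold CCRobj
      calc ∑ i, frobSq (Al i * Yv' i - embedRow i (Fv i) - U' i)
          = ∑ i, frobSq (G i + (Al i * (Yv' i - Yv i) - (U' i - U i))) := by
            refine Finset.sum_congr rfl fun i _ => ?_
            congr 1
            rw [Matrix.mul_sub]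
            simp only [hGdef]
            abel
        _ = ∑ i, (frobSq (G i) + 2 * frobInner (G i) (Al i * (Yv' i - Yv i) - (U' i - U i))
              + frobSq (Al i * (Yv' i - Yv i) - (U' i - U i))) := by
            exact Finset.sum_congr rfl fun i _ => frobSq_add _ _
        _ = ∑ i, frobSq (G i) + 2 * ∑ i, frobInner (G i) (Al i * (Yv' i - Yv i) - (U' i - U i))
              + ∑ i, frobSq (Al i * (Yv' i - Yv i) - (U' i - U i)) := by
            rw [Finset.sum_add_distrib, Finset.sum_add_distrib, Finset.mul_sum]
        _ = _ := by
            rw [hcross, mul_zero, add_zero]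
            congr 1
            simp only [hGdef]
    rw [hobj']
    have hnn : 0 ≤ ∑ i, frobSq (Al i * (Yv' i - Yv i) - (U' i - U i)) :=
      Finset.sum_nonneg fun i _ => frobSq_nonneg _
    linarith
end

section
/- Let a be the adjacency matrix of a connected weighted undirected graph on n nodes, and let V₁,…,Vₙ ∈ ℝ^{r×q}. Then Σ_{i=1}^n V_i = 0 (the r×q zero matrix) if and only if there exist Z₁,…,Zₙ ∈ ℝ^{r×q} such that V_i = Σ_{j=1}^n a_{i,j}(Z_i − Z_j) for every i = 1,…,n. -/
open Matrix

lemma antisym_sum {n : ℕ} {M : Type*} [AddCommGroup M] [Module ℝ M] (f : Fin n → Fin n → M)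
    (h : ∀ i j, f i j = - f j i) : ∑ i, ∑ j, f i j = 0 := by
  have h1 : (∑ i, ∑ j, f i j) = - ∑ i, ∑ j, f i j := by
    conv_lhs => rw [Finset.sum_comm]
    rw [show (∑ j, ∑ i, f i j) = ∑ j, ∑ i, -(f j i) from
      Finset.sum_congr rfl fun j _ => Finset.sum_congr rfl fun i _ => h i j]
    simp
  have h2 : (2:ℝ) • (∑ i, ∑ j, f i j) = 0 := by
    rw [two_smul]
    nth_rewrite 1 [h1]
    simp
  simpa using h2

lemma key_scalar (n : ℕ) (a : Matrix (Fin n) (Fin n) ℝ)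
    (hsym : ∀ i j, a i j = a j i) (hnonneg : ∀ i j, 0 ≤ a i j)
    (hdiag : ∀ i, a i i = 0) (hconn : GraphConnected a)
    (v : Fin n → ℝ) (hv : ∑ i, v i = 0) :
    ∃ z : Fin n → ℝ, ∀ i, v i = ∑ j, a i j * (z i - z j) := by
  rcases Nat.eq_zero_or_pos n with hn | hn
  · subst hn; exact ⟨0, fun i => i.elim0⟩
  set i₀ : Fin n := ⟨0, hn⟩
  set L : Matrix (Fin n) (Fin n) ℝ :=
    Matrix.of fun i j => (if i = j then ∑ k, a i k else 0) - a i j with hLdef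
  have hL : ∀ z : Fin n → ℝ, ∀ i, L.mulVec z i = ∑ j, a i j * (z i - z j) := by
    intro z i
    have : L.mulVec z i = ∑ j, ((if i = j then ∑ k, a i k else 0) - a i j) * z j := rfl
    rw [this]
    simp_rw [sub_mul, mul_sub, Finset.sum_sub_distrib, ite_mul, zero_mul,
      Finset.sum_ite_eq, Finset.mem_univ, if_true, Finset.sum_mul]
  set f := L.mulVecLin with hf
  -- kernel of f is span of constant 1
  have hker : LinearMap.ker f = Submodule.span ℝ {(fun _ => (1:ℝ) : Fin n → ℝ)} := by
    apply le_antisymm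
    · intro z hz
      have hz' : ∀ i, ∑ j, a i j * (z i - z j) = 0 := by
        intro i
        rw [← hL z i]
        have := LinearMap.mem_ker.mp hz
        rw [show L.mulVec z = f z from rfl, this]; rfl
      -- quadratic form is zero
      have hA : ∑ i, ∑ j, z i * (a i j * (z i - z j)) = 0 := by
        simp_rw [← Finset.mul_sum]
        simp [hz']
      have hB : ∑ i, ∑ j, z j * (a i j * (z j - z i)) = 0 := by
        rw [Finset.sum_comm]
        have : ∀ j, ∑ i, z j * (a i j * (z j - z i)) = 0 := by
          intro j
          simp_rw [← Finset.mul_sum]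
          have : (∑ i, a i j * (z j - z i)) = ∑ i, a j i * (z j - z i) := by
            exact Finset.sum_congr rfl fun i _ => by rw [hsym]
          rw [this, hz' j, mul_zero]
        simp [this]
      have hQ : ∑ i, ∑ j, a i j * (z i - z j)^2 = 0 := by
        have : ∀ i j : Fin n, a i j * (z i - z j)^2
            = z i * (a i j * (z i - z j)) + z j * (a i j * (z j - z i)) := by
          intro i j; ring
        simp_rw [this, Finset.sum_add_distrib, hA, hB, add_zero]
      have hterm : ∀ i j : Fin n, a i j * (z i - z j)^2 = 0 := by
        have h1 := (Finset.sum_eq_zero_iff_of_nonneg (fun i _ =>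
          Finset.sum_nonneg fun j _ => mul_nonneg (hnonneg i j) (sq_nonneg _))).mp hQ
        intro i j
        have h2 := (Finset.sum_eq_zero_iff_of_nonneg (fun j _ =>
          mul_nonneg (hnonneg i j) (sq_nonneg _))).mp (h1 i (Finset.mem_univ i))
        exact h2 j (Finset.mem_univ j)
      have hstep : ∀ u w : Fin n, (u ≠ w ∧ 0 < a u w) → z u = z w := by
        intro u w ⟨_, hpos⟩
        have := hterm u w
        have h3 : (z u - z w)^2 = 0 := by
          by_contra h
          exact h (by
            have := mul_eq_zero.mp this
            rcases this with h' | h'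
            · exact absurd h' (ne_of_gt hpos)
            · exact h')
        have := pow_eq_zero_iff (n := 2) (by norm_num) |>.mp h3
        linarith [sub_eq_zero.mp this]
      have hchain : ∀ {u w : Fin n},
          Relation.ReflTransGen (fun u v : Fin n => u ≠ v ∧ 0 < a u v) u w → z u = z w := by
        intro u w h
        induction h with
        | refl => rfl
        | tail _ hbc ih => rw [ih, hstep _ _ hbc]
      have hconst : ∀ i, z i = z i₀ := fun i => hchain (hconn i i₀)
      rw [Submodule.mem_span_singleton]
      exact ⟨z i₀, by funext i; simp [hconst i]⟩
    · rw [Submodule.span_le, Set.singleton_subset_iff]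
      apply LinearMap.mem_ker.mpr
      have : f (fun _ => (1:ℝ)) = L.mulVec (fun _ => 1) := rfl
      rw [this]
      funext i
      rw [hL]
      simp
  -- finrank of kernel is 1
  have hone : ((fun _ => (1:ℝ)) : Fin n → ℝ) ≠ 0 := by
    intro h
    have := congrFun h i₀
    simp at this
  have hkerrank : Module.finrank ℝ (LinearMap.ker f) = 1 := by
    rw [hker, finrank_span_singleton hone]
  have htot : Module.finrank ℝ (Fin n → ℝ) = n := by simp
  have hrange : Module.finrank ℝ (LinearMap.range f) = n - 1 := by
    have := LinearMap.finrank_range_add_finrank_ker f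
    rw [hkerrank, htot] at this
    omega
  -- sum functional
  set φ : (Fin n → ℝ) →ₗ[ℝ] ℝ :=
    { toFun := fun w => ∑ i, w i
      map_add' := fun x y => by simp [Finset.sum_add_distrib]
      map_smul' := fun c x => by simp [Finset.mul_sum] } with hφ
  have hφsurj : Function.Surjective φ := by
    intro c
    exact ⟨Pi.single i₀ c, by simp [hφ]⟩
  have hφrank : Module.finrank ℝ (LinearMap.ker φ) = n - 1 := by
    have h1 := LinearMap.finrank_range_add_finrank_ker φ
    rw [LinearMap.range_eq_top.mpr hφsurj] at h1
    simp [htot] at h1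
    omega
  have hsub : LinearMap.range f ≤ LinearMap.ker φ := by
    rintro w ⟨z, rfl⟩
    apply LinearMap.mem_ker.mpr
    have : φ (f z) = ∑ i, ∑ j, a i j * (z i - z j) := by
      simp only [hφ, LinearMap.coe_mk, AddHom.coe_mk]
      exact Finset.sum_congr rfl fun i _ => hL z i
    rw [this]
    apply antisym_sum
    intro i j
    rw [hsym i j]; ring
  have heq : LinearMap.range f = LinearMap.ker φ :=
    Submodule.eq_of_le_of_finrank_le hsub (by rw [hrange, hφrank])
  have hvmem : v ∈ LinearMap.ker φ := LinearMap.mem_ker.mpr hv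
  rw [← heq] at hvmem
  obtain ⟨z, hz⟩ := hvmem
  exact ⟨z, fun i => by rw [← hL z i, ← hz]; rfl⟩

theorem stmt_19 (n r q : ℕ) (a : Matrix (Fin n) (Fin n) ℝ)
    (hsym : ∀ i j, a i j = a j i) (hnonneg : ∀ i j, 0 ≤ a i j)
    (hdiag : ∀ i, a i i = 0) (hconn : GraphConnected a)
    (V : Fin n → Matrix (Fin r) (Fin q) ℝ) :
    (∑ i, V i = 0) ↔
      ∃ Z : Fin n → Matrix (Fin r) (Fin q) ℝ,
        ∀ i, V i = ∑ j, a i j • (Z i - Z j) := by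
  constructor
  · intro hV
    have h : ∀ s : Fin r, ∀ t : Fin q, ∃ z : Fin n → ℝ,
        ∀ i, V i s t = ∑ j, a i j * (z i - z j) := by
      intro s t
      apply key_scalar n a hsym hnonneg hdiag hconn
      have := congrFun (congrFun hV s) t
      rw [show (0:Matrix (Fin r) (Fin q) ℝ) s t = 0 from rfl, Matrix.sum_apply] at this
      exact this
    choose z hz using h
    refine ⟨fun i => Matrix.of fun s t => z s t i, fun i => ?_⟩
    ext s t
    rw [hz s t i]
    rw [Matrix.sum_apply]
    exact Finset.sum_congr rfl fun j _ => by simp [Matrix.smul_apply, Matrix.sub_apply]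
  · rintro ⟨Z, hZ⟩
    calc ∑ i, V i = ∑ i, ∑ j, a i j • (Z i - Z j) := Finset.sum_congr rfl fun i _ => hZ i
      _ = 0 := by
        apply antisym_sum
        intro i j
        rw [hsym i j, show Z i - Z j = -(Z j - Z i) from (neg_sub _ _).symm, smul_neg]
end
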